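/- Let (B,C) be a normal contact algebra and u an ultrafilter in B. Then there exists a unique cluster σ_u in (B,C) containing u, and σ_u = {a ∈ B | aCb for every b ∈ u}. -/
import Mathlib


variable {B : Type*} [BooleanAlgebra B]

/-- A contact relation on a Boolean algebra: axioms (C1)-(C4). -/
def IsContactRel (C : B → B → Prop) : Prop :=
  (∀ a, a ≠ ⊥ → C a a) ∧
  (∀ a b, C a b → a ≠ ⊥ ∧ b ≠ ⊥) ∧
  (∀ a b, C a b → C b a) ∧
  (∀ a b c, C a (b ⊔ c) ↔ C a b ∨ C a c)

/-- A normal contact relation: additionally axioms (C5) and (C6). -/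
def IsNormalContactRel (C : B → B → Prop) : Prop :=
  IsContactRel C ∧
  (∀ a b, ¬ C a b → ∃ c, ¬ C a c ∧ ¬ C b cᶜ) ∧
  (∀ a, a ≠ ⊤ → ∃ b, b ≠ ⊥ ∧ ¬ C b a)

/-- A cluster in a contact algebra: axioms (K1)-(K3). -/
def IsCluster (C : B → B → Prop) (σ : Set B) : Prop :=
  σ.Nonempty ∧
  (∀ a ∈ σ, ∀ b ∈ σ, C a b) ∧
  (∀ a b, a ⊔ b ∈ σ → a ∈ σ ∨ b ∈ σ) ∧
  (∀ a, (∀ b ∈ σ, C a b) → a ∈ σ)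

/-- An ultrafilter in a Boolean algebra, as a set. -/
def IsUltrafilterSet (u : Set B) : Prop :=
  ⊤ ∈ u ∧ ⊥ ∉ u ∧
  (∀ a b, a ∈ u → a ≤ b → b ∈ u) ∧
  (∀ a b, a ∈ u → b ∈ u → a ⊓ b ∈ u) ∧
  (∀ a : B, a ∈ u ∨ aᶜ ∈ u)

/-- Every ultrafilter in a normal contact algebra is contained in a unique
cluster, namely σ_u = {a | aCb for all b ∈ u}. -/
theorem unique_cluster_containing_ultrafilter (C : B → B → Prop)
    (hC : IsNormalContactRel C) (u : Set B) (hu : IsUltrafilterSet u) :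
    IsCluster C {a : B | ∀ b ∈ u, C a b} ∧
    u ⊆ {a : B | ∀ b ∈ u, C a b} ∧
    (∀ σ : Set B, IsCluster C σ → u ⊆ σ → σ = {a : B | ∀ b ∈ u, C a b}) := by
  obtain ⟨⟨hC1, hC2, hC3, hC4⟩, hC5, _⟩ := hC
  obtain ⟨huT, huB, huUp, huInf, huUlt⟩ := hu
  -- monotonicity in second argument
  have mono2 : ∀ a b b' : B, C a b → b ≤ b' → C a b' := by
    intro a b b' h hle
    have : C a (b ⊔ b') := (hC4 a b b').2 (Or.inl h)
    rwa [sup_eq_right.2 hle] at this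
  have mono1 : ∀ a a' b : B, C a b → a ≤ a' → C a' b := by
    intro a a' b h hle
    exact hC3 _ _ (mono2 b a a' (hC3 _ _ h) hle)
  -- u ⊆ σ_u
  have hsub : u ⊆ {a : B | ∀ b ∈ u, C a b} := by
    intro a ha b hb
    have hab : a ⊓ b ∈ u := huInf a b ha hb
    have hne : a ⊓ b ≠ ⊥ := fun h => huB (h ▸ hab)
    have := hC1 _ hne
    exact mono1 _ _ _ (mono2 _ _ _ this inf_le_right) inf_le_left
  have hK1 : ∀ a ∈ {a : B | ∀ b ∈ u, C a b}, ∀ b ∈ {a : B | ∀ b ∈ u, C a b}, C a b := by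
    intro a ha b hb
    by_contra hab
    obtain ⟨c, hac, hbc⟩ := hC5 a b hab
    rcases huUlt c with hc | hc
    · exact hac (ha c hc)
    · exact hbc (hb cᶜ hc)
  refine ⟨⟨⟨⊤, hsub huT⟩, hK1, ?_, ?_⟩, hsub, ?_⟩
  · -- K2
    intro a b hab
    by_contra h
    push_neg at h
    obtain ⟨ha, hb⟩ := h
    simp only [Set.mem_setOf_eq, not_forall] at ha hb
    obtain ⟨b1, hb1, ha1⟩ := ha
    obtain ⟨b2, hb2, hb2'⟩ := hb
    have h12 : b1 ⊓ b2 ∈ u := huInf _ _ hb1 hb2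
    have : C (a ⊔ b) (b1 ⊓ b2) := hab _ h12
    have := (hC4 _ a b).1 (hC3 _ _ this)
    rcases this with h' | h'
    · exact ha1 (mono2 _ _ _ (hC3 _ _ h') inf_le_left)
    · exact hb2' (mono2 _ _ _ (hC3 _ _ h') inf_le_right)
  · -- K3
    intro a h
    exact fun b hb => h b (hsub hb)
  · -- uniqueness
    intro σ ⟨_, hK1', _, hK3'⟩ husub
    apply Set.eq_of_subset_of_subset
    · intro a ha b hb
      exact hK1' a ha b (husub hb)
    · intro a ha
      apply hK3'
      intro b hb
      by_contra hab
      obtain ⟨c, hac, hbc⟩ := hC5 a b hab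
      rcases huUlt c with hc | hc
      · exact hac (ha c hc)
      · exact hbc (hK1' b hb cᶜ (husub hc))
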